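/- Let E be a closed symmetric densely defined operator on a Hilbert space X and let a ∈ ℝ be a point of regular type for E. Denote M_ξ = rng(E − ξ I). Then for every non-real z, X decomposes as a direct sum X = M_z ∔ (M_a)^⊥, with M_z ∩ (M_a)^⊥ = {0}. -/

import Mathlib

open scoped InnerProductSpace

section Aux

lemma stmt10_key_alg (a : ℝ) (z : ℂ) (hz : z.im ≠ 0) (s t q : ℂ)
    (hs : (starRingEnd ℂ) s = s) (ht : (starRingEnd ℂ) t = t) (hq : (starRingEnd ℂ) q = q)
    (h : s - a * t - (starRingEnd ℂ) z * t + (starRingEnd ℂ) z * (a * q) = 0) :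
    s - a * t - a * t + a * (a * q) = 0 := by
  have h2 := congrArg (starRingEnd ℂ) h
  simp only [map_sub, map_add, map_mul, hs, ht, hq, Complex.conj_conj, Complex.conj_ofReal,
    map_zero] at h2
  have hzz : z - (starRingEnd ℂ) z ≠ 0 := by
    rw [Complex.sub_conj]; simp [Complex.ext_iff, hz]
  have htq : t = a * q := by
    have h3 : (z - (starRingEnd ℂ) z) * (t - a * q) = 0 := by linear_combination h - h2
    rcases mul_eq_zero.1 h3 with h' | h'
    · exact absurd h' hzz
    · linear_combination h'
  linear_combination h + ((starRingEnd ℂ) z - a) * htq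

lemma stmt10_key_vec {X : Type*} [NormedAddCommGroup X] [InnerProductSpace ℂ X]
    (u v : X) (hsym : ⟪u, v⟫_ℂ = ⟪v, u⟫_ℂ) (a : ℝ) (z : ℂ) (hz : z.im ≠ 0)
    (h : ⟪u - z • v, u - (a:ℂ) • v⟫_ℂ = 0) : u - (a:ℂ) • v = 0 := by
  rw [← inner_self_eq_zero (𝕜 := ℂ)]
  simp only [inner_sub_left, inner_sub_right, inner_smul_left, inner_smul_right,
    Complex.conj_ofReal] at h ⊢
  have hs : (starRingEnd ℂ) ⟪u, u⟫_ℂ = ⟪u, u⟫_ℂ := by rw [inner_conj_symm]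
  have hq : (starRingEnd ℂ) ⟪v, v⟫_ℂ = ⟪v, v⟫_ℂ := by rw [inner_conj_symm]
  have ht : (starRingEnd ℂ) ⟪u, v⟫_ℂ = ⟪u, v⟫_ℂ := by rw [inner_conj_symm, ← hsym]
  have hvu : ⟪v, u⟫_ℂ = ⟪u, v⟫_ℂ := hsym.symm
  rw [hvu] at h ⊢
  have := stmt10_key_alg a z hz ⟪u, u⟫_ℂ ⟪u, v⟫_ℂ ⟪v, v⟫_ℂ hs ht hq (by linear_combination h)
  linear_combination this

lemma stmt10_cauchy_transfer {X Y : Type*} [NormedAddCommGroup X] [NormedAddCommGroup Y]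
    (u : ℕ → X) (v : ℕ → Y) (c : ℝ) (hc : 0 < c)
    (hb : ∀ n m, c * ‖u n - u m‖ ≤ ‖v n - v m‖) (hv : CauchySeq v) : CauchySeq u := by
  rw [Metric.cauchySeq_iff] at hv ⊢
  intro ε hε
  obtain ⟨N, hN⟩ := hv (c * ε) (by positivity)
  refine ⟨N, fun n hn m hm => ?_⟩
  have h1 := hb n m
  have h2 := hN n hn m hm
  rw [dist_eq_norm] at h2 ⊢
  nlinarith [norm_nonneg (u n - u m)]

variable {X : Type*} [NormedAddCommGroup X] [InnerProductSpace ℂ X] [CompleteSpace X]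

/-- The symmetric-extension estimate: for `f ∈ D` and `φ ⊥ M_a`,
`|Im z| * ‖f + φ‖ ≤ ‖(E f - z f) + (a - z) φ‖`. -/
lemma stmt10_est (D : Submodule ℂ X) (E : D →ₗ[ℂ] X)
    (hsym : ∀ f g : D, ⟪E f, (g : X)⟫_ℂ = ⟪(f : X), E g⟫_ℂ) (a : ℝ) (z : ℂ)
    (f : D) (φ : X) (hφ : ∀ g : D, ⟪E g - (a:ℂ) • (g : X), φ⟫_ℂ = 0) :
    |z.im| * ‖(f : X) + φ‖ ≤ ‖(E f - z • (f : X)) + ((a:ℂ) - z) • φ‖ := by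
  set w : X := E f + (a:ℂ) • φ with hw
  set h : X := (f : X) + φ with hh
  have hvec : (E f - z • (f : X)) + ((a:ℂ) - z) • φ = w - z • h := by
    rw [hw, hh]; module
  have hEfφ : ⟪E f, φ⟫_ℂ = (a:ℂ) * ⟪(f : X), φ⟫_ℂ := by
    have h0 := hφ f
    rw [inner_sub_left, inner_smul_left, Complex.conj_ofReal] at h0
    linear_combination h0
  have hr : (starRingEnd ℂ) ⟪w, h⟫_ℂ = ⟪w, h⟫_ℂ := by
    rw [hw, hh]
    simp only [inner_add_left, inner_add_right, inner_smul_left, inner_smul_right,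
      map_add, map_mul, Complex.conj_ofReal, inner_conj_symm]
    have h1 : ⟪φ, (E f : X)⟫_ℂ = (a:ℂ) * ⟪φ, (f : X)⟫_ℂ := by
      calc ⟪φ, (E f : X)⟫_ℂ = (starRingEnd ℂ) ⟪E f, φ⟫_ℂ := by rw [inner_conj_symm]
        _ = (a:ℂ) * ⟪φ, (f : X)⟫_ℂ := by
            rw [hEfφ, map_mul, Complex.conj_ofReal, inner_conj_symm]
    rw [h1, hEfφ, hsym f f]
    ring
  obtain ⟨r, hrr⟩ : ∃ r : ℝ, ⟪w, h⟫_ℂ = (r : ℂ) :=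
    ⟨(⟪w, h⟫_ℂ).re, (Complex.conj_eq_iff_re.1 hr).symm⟩
  have hnz : ‖z‖ ^ 2 = z.re ^ 2 + z.im ^ 2 := by
    rw [Complex.sq_norm, Complex.normSq_apply]; ring
  have h1 : ‖w - z • h‖ ^ 2 = ‖w‖ ^ 2 - 2 * (z.re * r) + (z.re ^ 2 + z.im ^ 2) * ‖h‖ ^ 2 := by
    rw [norm_sub_sq (𝕜 := ℂ), inner_smul_right, hrr, norm_smul, mul_pow, ← hnz]
    norm_num [Complex.mul_re]
  have h2 : ‖w - ((z.re : ℝ) : ℂ) • h‖ ^ 2 = ‖w‖ ^ 2 - 2 * (z.re * r) + z.re ^ 2 * ‖h‖ ^ 2 := by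
    rw [norm_sub_sq (𝕜 := ℂ), inner_smul_right, hrr, norm_smul, mul_pow]
    norm_num [Complex.mul_re]
  have hsq : (|z.im| * ‖h‖) ^ 2 ≤ ‖w - z • h‖ ^ 2 := by
    have h3 : (0:ℝ) ≤ ‖w - ((z.re : ℝ) : ℂ) • h‖ ^ 2 := sq_nonneg _
    rw [mul_pow, sq_abs]
    nlinarith
  have := Real.sqrt_le_sqrt hsq
  rw [Real.sqrt_sq (by positivity), Real.sqrt_sq (norm_nonneg _)] at this
  rw [hvec]
  exact this

end Aux

/-- for a closed symmetric densely defined operator `E` with a real point `a`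
of regular type, `X = M_z ∔ (M_a)ᗮ` for every non-real `z`, where `M_ξ = rng (E - ξ)`. -/
theorem stmt_10 {X : Type*} [NormedAddCommGroup X] [InnerProductSpace ℂ X] [CompleteSpace X]
    (D : Submodule ℂ X) (hD : Dense (D : Set X)) (E : D →ₗ[ℂ] X)
    (hsym : ∀ f g : D, ⟪E f, (g : X)⟫_ℂ = ⟪(f : X), E g⟫_ℂ)
    (hclosed : IsClosed {p : X × X | ∃ g : D, (g : X) = p.1 ∧ E g = p.2})
    (a : ℝ)
    (hreg : ∃ c > 0, ∀ g : D, c * ‖(g : X)‖ ≤ ‖E g - (a : ℂ) • (g : X)‖)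
    (z : ℂ) (hz : z.im ≠ 0) :
    LinearMap.range (E - z • D.subtype) ⊔ (LinearMap.range (E - (a : ℂ) • D.subtype))ᗮ = ⊤ ∧
      LinearMap.range (E - z • D.subtype) ⊓ (LinearMap.range (E - (a : ℂ) • D.subtype))ᗮ = ⊥ := by
  obtain ⟨c, hc, hb⟩ := hreg
  set Mz : Submodule ℂ X := LinearMap.range (E - z • D.subtype) with hMz
  set Ma : Submodule ℂ X := LinearMap.range (E - (a : ℂ) • D.subtype) with hMa
  have happ : ∀ (w : ℂ) (g : D), (E - w • D.subtype) g = E g - w • (g : X) := by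
    intro w g; simp
  have hmemMz : ∀ g : D, E g - z • (g : X) ∈ Mz := fun g => ⟨g, happ z g⟩
  have hmemMa : ∀ g : D, E g - (a:ℂ) • (g : X) ∈ Ma := fun g => ⟨g, happ _ g⟩
  have hN : ∀ φ ∈ Maᗮ, ∀ g : D, ⟪E g - (a:ℂ) • (g : X), φ⟫_ℂ = 0 := by
    intro φ hφ g
    exact (Submodule.mem_orthogonal _ _).1 hφ _ (hmemMa g)
  -- M_a is closed
  have hMaClosed : IsClosed (Ma : Set X) := by
    apply IsSeqClosed.isClosed
    intro x p hmem hlim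
    choose g hg using fun n => hmem n
    have hg' : ∀ n, E (g n) - (a:ℂ) • (↑(g n) : X) = x n := fun n => by
      rw [← hg n, happ]
    have hcau : CauchySeq (fun n => (↑(g n) : X)) := by
      refine stmt10_cauchy_transfer _ x c hc (fun n m => ?_) hlim.cauchySeq
      have h1 := hb (g n - g m)
      simp only [map_sub, Submodule.coe_sub] at h1
      calc c * ‖(↑(g n) : X) - ↑(g m)‖
          ≤ ‖E (g n) - E (g m) - (a:ℂ) • ((↑(g n) : X) - ↑(g m))‖ := h1
        _ = ‖x n - x m‖ := by rw [← hg' n, ← hg' m]; congr 1; module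
    obtain ⟨x₀, hx₀⟩ := cauchySeq_tendsto_of_complete hcau
    have hE : Filter.Tendsto (fun n => E (g n)) Filter.atTop (nhds (p + (a:ℂ) • x₀)) := by
      have heq : ∀ n, E (g n) = x n + (a:ℂ) • (↑(g n) : X) := fun n => by
        rw [← hg' n]; module
      simp only [heq]
      exact hlim.add (hx₀.const_smul _)
    obtain ⟨f, hf1, hf2⟩ := hclosed.mem_of_tendsto (hx₀.prodMk_nhds hE)
      (Filter.Eventually.of_forall fun n => ⟨g n, rfl, rfl⟩)
    refine ⟨f, ?_⟩
    rw [happ, hf1, hf2]; module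
  haveI : CompleteSpace Ma := hMaClosed.completeSpace_coe
  have haz : (a:ℂ) - z ≠ 0 := by
    intro h
    apply hz
    have := congrArg Complex.im h
    simpa using this
  -- key vanishing lemma
  have hkey : ∀ g : D, ⟪E g - z • (g : X), E g - (a:ℂ) • (g : X)⟫_ℂ = 0 →
      E g - (a:ℂ) • (g : X) = 0 := by
    intro g hg
    exact stmt10_key_vec (E g) (g : X) (hsym g g) a z hz hg
  constructor
  · -- sup = ⊤
    set S : Submodule ℂ X := Mz ⊔ Maᗮ with hS
    -- S is closed
    have hSclosed : IsClosed (S : Set X) := by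
      apply IsSeqClosed.isClosed
      intro s y hmem hlim
      have hrep : ∀ n, ∃ (f : D) (ψ : X), ψ ∈ Maᗮ ∧
          s n = (E f - z • (f : X)) + ((a:ℂ) - z) • ψ := by
        intro n
        obtain ⟨m, hm, φ, hφ, hsum⟩ := Submodule.mem_sup.1 (hmem n)
        obtain ⟨f, hf⟩ := hm
        refine ⟨f, ((a:ℂ) - z)⁻¹ • φ, Maᗮ.smul_mem _ hφ, ?_⟩
        rw [smul_smul, mul_inv_cancel₀ haz, one_smul, ← hsum, ← hf, happ]
      choose f ψ hψ hs using hrep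
      set h : ℕ → X := fun n => (↑(f n) : X) + ψ n with hhdef
      have him : (0:ℝ) < |z.im| := abs_pos.2 hz
      have hcauh : CauchySeq h := by
        refine stmt10_cauchy_transfer h s |z.im| him (fun n m => ?_) hlim.cauchySeq
        have hest := stmt10_est D E hsym a z (f n - f m) (ψ n - ψ m)
          (fun g => hN _ (Maᗮ.sub_mem (hψ n) (hψ m)) g)
        simp only [map_sub, Submodule.coe_sub] at hest
        have hd1 : h n - h m = ((↑(f n) : X) - ↑(f m)) + (ψ n - ψ m) := by
          simp only [hhdef]; module
        have hd2 : s n - s m = (E (f n) - E (f m) - z • ((↑(f n) : X) - ↑(f m))) +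
            ((a:ℂ) - z) • (ψ n - ψ m) := by rw [hs n, hs m]; module
        rw [hd1, hd2]; exact hest
      obtain ⟨h₀, hh₀⟩ := cauchySeq_tendsto_of_complete hcauh
      -- (E - a) f n = s n + (z - a) • h n
      have hEa : ∀ n, E (f n) - (a:ℂ) • (↑(f n) : X) = s n + (z - (a:ℂ)) • h n := by
        intro n
        rw [hs n, hhdef]; module
      have hEalim : Filter.Tendsto (fun n => E (f n) - (a:ℂ) • (↑(f n) : X))
          Filter.atTop (nhds (y + (z - (a:ℂ)) • h₀)) := by
        simp only [hEa]
        exact hlim.add (hh₀.const_smul _)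
      have hcauf : CauchySeq (fun n => (↑(f n) : X)) := by
        refine stmt10_cauchy_transfer _ _ c hc (fun n m => ?_) hEalim.cauchySeq
        have h1 := hb (f n - f m)
        simp only [map_sub, Submodule.coe_sub] at h1
        calc c * ‖(↑(f n) : X) - ↑(f m)‖
            ≤ ‖E (f n) - E (f m) - (a:ℂ) • ((↑(f n) : X) - ↑(f m))‖ := h1
          _ = ‖(E (f n) - (a:ℂ) • (↑(f n) : X)) - (E (f m) - (a:ℂ) • (↑(f m) : X))‖ := by
              congr 1; module
      obtain ⟨x₀, hx₀⟩ := cauchySeq_tendsto_of_complete hcauf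
      have hElim : Filter.Tendsto (fun n => E (f n)) Filter.atTop
          (nhds (y + (z - (a:ℂ)) • h₀ + (a:ℂ) • x₀)) :=
        (hEalim.add (hx₀.const_smul ((a:ℂ)))).congr (fun n => by module)
      obtain ⟨f₀, hf₀1, hf₀2⟩ := hclosed.mem_of_tendsto (hx₀.prodMk_nhds hElim)
        (Filter.Eventually.of_forall fun n => ⟨f n, rfl, rfl⟩)
      have hψlim : Filter.Tendsto ψ Filter.atTop (nhds (h₀ - x₀)) :=
        (hh₀.sub hx₀).congr (fun n => by simp only [hhdef]; module)
      have hψmem : h₀ - x₀ ∈ Maᗮ :=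
        Ma.isClosed_orthogonal.mem_of_tendsto hψlim
          (Filter.Eventually.of_forall fun n => hψ n)
      have hslim : Filter.Tendsto s Filter.atTop
          (nhds ((y + (z - (a:ℂ)) • h₀ + (a:ℂ) • x₀ - z • x₀) +
            ((a:ℂ) - z) • (h₀ - x₀))) :=
        ((hElim.sub (hx₀.const_smul z)).add (hψlim.const_smul _)).congr
          (fun n => (hs n).symm)
      have hy : y = (y + (z - (a:ℂ)) • h₀ + (a:ℂ) • x₀ - z • x₀) +
          ((a:ℂ) - z) • (h₀ - x₀) := tendsto_nhds_unique hlim hslim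
      rw [hy]
      refine Submodule.add_mem_sup ?_ (Maᗮ.smul_mem _ hψmem)
      have heq2 : y + (z - (a:ℂ)) • h₀ + (a:ℂ) • x₀ - z • x₀
          = E f₀ - z • (↑f₀ : X) := by rw [hf₀2, hf₀1]
      rw [heq2]
      exact hmemMz f₀
    -- S is dense
    have hSorth : Sᗮ = ⊥ := by
      rw [Submodule.eq_bot_iff]
      intro x hx
      have hxMz : x ∈ Mzᗮ := Submodule.orthogonal_le le_sup_left hx
      have hxN : x ∈ Maᗮᗮ := Submodule.orthogonal_le le_sup_right hx
      rw [Submodule.orthogonal_orthogonal] at hxN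
      obtain ⟨g, hg⟩ := hxN
      rw [happ] at hg
      have h0 : ⟪E g - z • (g : X), x⟫_ℂ = 0 :=
        (Submodule.mem_orthogonal _ _).1 hxMz _ (hmemMz g)
      rw [← hg]
      exact hkey g (by rw [hg]; exact h0)
    have := Submodule.topologicalClosure_eq_top_iff.2 hSorth
    have hset : (S : Set X) = Set.univ := by
      have h1 : closure (S : Set X) = Set.univ := by
        rw [← Submodule.topologicalClosure_coe, this]; rfl
      rw [← hSclosed.closure_eq, h1]
    rw [Submodule.eq_top_iff']
    intro x
    have : x ∈ (S : Set X) := hset ▸ Set.mem_univ x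
    exact this
  · -- inf = ⊥
    rw [Submodule.eq_bot_iff]
    rintro x ⟨hxMz, hxN⟩
    obtain ⟨g, hg⟩ := hxMz
    rw [happ] at hg
    have h0 : ⟪E g - (a:ℂ) • (g : X), x⟫_ℂ = 0 :=
      (Submodule.mem_orthogonal _ _).1 hxN _ (hmemMa g)
    rw [← hg] at h0
    have h1 : ⟪E g - z • (g : X), E g - (a:ℂ) • (g : X)⟫_ℂ = 0 := by
      rw [← inner_conj_symm, h0, map_zero]
    have h2 := hkey g h1
    have h3 : (g : X) = 0 := by
      have h5 := hb g
      rw [h2, norm_zero] at h5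
      have h6 : ‖(g : X)‖ = 0 := le_antisymm (by nlinarith) (norm_nonneg _)
      exact norm_eq_zero.1 h6
    have h4 : g = 0 := Subtype.ext (by simpa using h3)
    rw [← hg, h4]
    simp
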